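/- Let P be a scale group acting on T_{q+1} and let ξ : ℤ → {0,…,q−1} satisfy ξ_i = 0 for all sufficiently small i (so ξ represents an end ω′ ≠ ω). Then there exists x ∈ P such that x(ξ|_m) = ξ|_{m+1} for every m ∈ ℤ; in particular x fixes both ω and ω′ and translates the bi-infinite path (ω, ω′) mapping each vertex ξ|_m to its child ξ|_{m+1}. -/

import Mathlib

namespace Scale

/-- A vertex of the `(q+1)`-regular tree `T_{q+1}`: a level `n ∈ ℤ` together with a
labelling `ℤ → Fin q` which vanishes above the level and for all sufficiently small indices. -/
@[ext] structure Vertex (q : ℕ) where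
  level : ℤ
  lab : ℤ → Fin q
  zero_gt : ∀ i : ℤ, level < i → (lab i : ℕ) = 0
  bdd : ∃ N : ℤ, ∀ i : ℤ, i < N → (lab i : ℕ) = 0

namespace Vertex

variable {q : ℕ} [NeZero q]

/-- The parent `v⁺` of a vertex. -/
def parent (v : Vertex q) : Vertex q where
  level := v.level - 1
  lab := fun i => if v.level - 1 < i then 0 else v.lab i
  zero_gt := by intro i hi; simp [hi]
  bdd := by
    obtain ⟨N, hN⟩ := v.bdd
    refine ⟨N, fun i hi => ?_⟩
    by_cases h : v.level - 1 < i
    · simp [h]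
    · simp [h, hN i hi]

/-- The child `vj` of a vertex `v`. -/
def child (v : Vertex q) (j : Fin q) : Vertex q where
  level := v.level + 1
  lab := fun i => if i = v.level + 1 then j else v.lab i
  zero_gt := by
    intro i hi
    have h1 : i ≠ v.level + 1 := by omega
    simp [h1, v.zero_gt i (by omega)]
  bdd := by
    obtain ⟨N, hN⟩ := v.bdd
    refine ⟨min N (v.level + 1), fun i hi => ?_⟩
    have h1 : i < N := lt_of_lt_of_le hi (min_le_left _ _)
    have h2 : i < v.level + 1 := lt_of_lt_of_le hi (min_le_right _ _)
    have h3 : i ≠ v.level + 1 := by omega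
    simp [h3, hN i h1]

/-- The restriction `w|_m` of a vertex to level `m`. -/
def trunc (v : Vertex q) (m : ℤ) : Vertex q where
  level := m
  lab := fun i => if m < i then 0 else v.lab i
  zero_gt := by intro i hi; simp [hi]
  bdd := by
    obtain ⟨N, hN⟩ := v.bdd
    refine ⟨N, fun i hi => ?_⟩
    by_cases h : m < i
    · simp [h]
    · simp [h, hN i hi]

/-- `w` is a descendant of `u` (in the rooted subtree `T_u`). -/
def Descendant (u w : Vertex q) : Prop := u.level ≤ w.level ∧ trunc w u.level = u

end Vertex

/-- The all-zero vertex `ṽ_n` at level `n`. -/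
def zeroVtx (q : ℕ) [NeZero q] (n : ℤ) : Vertex q where
  level := n
  lab := fun _ => 0
  zero_gt := by intro i _; simp
  bdd := ⟨0, by intro i _; simp⟩

/-- The map shifting all labels by `k` (a translation towards the end `ω` when `k > 0`). -/
def shiftMap {q : ℕ} (k : ℤ) (v : Vertex q) : Vertex q where
  level := v.level + k
  lab := fun i => v.lab (i - k)
  zero_gt := fun i hi => v.zero_gt (i - k) (by omega)
  bdd := by
    obtain ⟨N, hN⟩ := v.bdd
    exact ⟨N + k, fun i hi => hN (i - k) (by omega)⟩

/-- The translation `x̃₀ᵏ` of `T_{q+1}` as a permutation of the vertices. -/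
def shiftPerm (q : ℕ) (k : ℤ) : Equiv.Perm (Vertex q) where
  toFun := shiftMap k
  invFun := shiftMap (-k)
  left_inv := by
    intro v
    refine Vertex.ext ?_ ?_
    · show v.level + k + -k = v.level
      omega
    · funext i
      show v.lab (i - -k - k) = v.lab i
      congr 1
      omega
  right_inv := by
    intro v
    refine Vertex.ext ?_ ?_
    · show v.level + -k + k = v.level
      omega
    · funext i
      show v.lab (i - k - -k) = v.lab i
      congr 1
      omega

/-- The group `Isom(T_{q+1})_ω` of tree automorphisms fixing the distinguished end `ω`,
realised as the subgroup of permutations of the vertex set commuting with `parent`. -/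
def IsomOmega (q : ℕ) [NeZero q] : Subgroup (Equiv.Perm (Vertex q)) where
  carrier := {x | ∀ v : Vertex q, x (Vertex.parent v) = Vertex.parent (x v)}
  one_mem' := fun _ => rfl
  mul_mem' := by
    intro a b ha hb v
    show (a * b) (Vertex.parent v) = Vertex.parent ((a * b) v)
    rw [Equiv.Perm.mul_apply, Equiv.Perm.mul_apply, hb, ha]
  inv_mem' := by
    intro a ha v
    show a⁻¹ (Vertex.parent v) = Vertex.parent (a⁻¹ v)
    have h := ha (a⁻¹ v)
    rw [show a (a⁻¹ v) = v from a.apply_symm_apply v] at h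
    rw [← h, show a⁻¹ (a (a⁻¹ v).parent) = (a⁻¹ v).parent from a.symm_apply_apply _]

/-- The level shift `n(x)` of an automorphism (evaluated at the zero vertex; for members
of `IsomOmega q` the shift is the same at every vertex). -/
def lshift {q : ℕ} [NeZero q] (x : Equiv.Perm (Vertex q)) : ℤ := (x (zeroVtx q 0)).level

/-- An automorphism is elliptic if it fixes a vertex. -/
def Elliptic {q : ℕ} (x : Equiv.Perm (Vertex q)) : Prop := ∃ v : Vertex q, x v = v

/-- Topology of pointwise convergence on `X → X` for `X` discrete. -/
def funTop (X : Type*) : TopologicalSpace (X → X) :=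
  @Pi.topologicalSpace X (fun _ => X) (fun _ => ⊥)

/-- The permutation topology on `Equiv.Perm X`: pointwise stabilisers of finite sets of
points form a neighbourhood basis of the identity. -/
def permTop (X : Type*) : TopologicalSpace (Equiv.Perm X) :=
  @TopologicalSpace.induced (Equiv.Perm X) ((X → X) × (X → X))
    (fun g => ((g : X → X), ((g⁻¹ : Equiv.Perm X) : X → X)))
    (@instTopologicalSpaceProd _ _ (funTop X) (funTop X))

instance (q : ℕ) : TopologicalSpace (Equiv.Perm (Vertex q)) := permTop _

instance (q : ℕ) : TopologicalSpace (Equiv.Perm (List (Fin q))) := permTop _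

/-- A scale group: a closed subgroup of `Isom(T_{q+1})_ω` acting transitively on vertices. -/
def IsScaleGroup {q : ℕ} [NeZero q] (P : Subgroup (Equiv.Perm (Vertex q))) : Prop :=
  P ≤ IsomOmega q ∧ IsClosed (P : Set (Equiv.Perm (Vertex q))) ∧
    ∀ v w : Vertex q, ∃ x ∈ P, x v = w

/-- The stabiliser of the vertex `v` in `P`, as a subgroup of the ambient permutation group. -/
def stabIn {q : ℕ} (P : Subgroup (Equiv.Perm (Vertex q))) (v : Vertex q) :
    Subgroup (Equiv.Perm (Vertex q)) where
  carrier := {g | g ∈ P ∧ g v = v}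
  one_mem' := ⟨P.one_mem, rfl⟩
  mul_mem' := by
    intro a b ha hb
    exact ⟨P.mul_mem ha.1 hb.1, by rw [Equiv.Perm.mul_apply, hb.2, ha.2]⟩
  inv_mem' := by
    intro a ha
    refine ⟨P.inv_mem ha.1, ?_⟩
    rw [Equiv.Perm.inv_eq_iff_eq]
    exact ha.2.symm

/-- The conjugate subgroup `xVx⁻¹`. -/
def conjSub {G : Type*} [Group G] (x : G) (V : Subgroup G) : Subgroup G :=
  V.map (MulAut.conj x).toMonoidHom

/-- The vertex `ξ|_m` on the ray towards the end represented by `ξ`. -/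
def ray (q : ℕ) [NeZero q] (ξ : ℤ → Fin q) (N : ℤ) (hξ : ∀ i : ℤ, i < N → (ξ i : ℕ) = 0)
    (m : ℤ) : Vertex q where
  level := m
  lab := fun i => if m < i then 0 else ξ i
  zero_gt := by intro i hi; simp [hi]
  bdd := by
    refine ⟨N, fun i hi => ?_⟩
    by_cases h : m < i
    · simp [h]
    · simp [h, hξ i hi]

/-- The contraction group of `x` in `P`. -/
def conSet {q : ℕ} (P : Subgroup (Equiv.Perm (Vertex q))) (x : Equiv.Perm (Vertex q)) :
    Set (Equiv.Perm (Vertex q)) :=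
  {g | g ∈ P ∧ ∀ v : Vertex q, ∃ N : ℕ, ∀ n : ℕ, N ≤ n → (x ^ n * g * (x ^ n)⁻¹) v = v}


/-- `c` is a `P`-labelling of `T_{q+1}` with distinguished bi-infinite path `vp`:
each `c v` is a bijection from the directed edges out of `v` (encoded as the
neighbours of `v`) to `{0, …, q}`; the edge towards the parent is labelled `q`;
along the path `vp` the downward edges are labelled `0`; and `P` contains, for
all `u₁, u₂`, an element carrying `u₁` to `u₂` and preserving the labels on the
rooted subtree of descendants of `u₁`. -/
def IsPLabelling {q : ℕ} [NeZero q] (P : Subgroup (Equiv.Perm (Vertex q)))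
    (c : Vertex q → Vertex q → Fin (q + 1)) (vp : ℤ → Vertex q) : Prop :=
  (∀ v : Vertex q, ∀ j : Fin (q + 1),
      ∃! w : Vertex q, (Vertex.parent w = v ∨ w = Vertex.parent v) ∧ c v w = j) ∧
  (∀ v : Vertex q, (c v (Vertex.parent v) : ℕ) = q) ∧
  (∀ n : ℤ, Vertex.parent (vp (n + 1)) = vp n) ∧
  (∀ n : ℤ, (c (vp n) (vp (n + 1)) : ℕ) = 0) ∧
  (∀ u₁ u₂ : Vertex q, ∃ x, x ∈ P ∧ x u₁ = u₂ ∧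
    ∀ w w' : Vertex q, Vertex.Descendant u₁ w → Vertex.Descendant u₁ w' →
      (Vertex.parent w = w' ∨ Vertex.parent w' = w) → c (x w) (x w') = c w w')

open Classical in
/-- The standard labelling of `T_{q+1}`: the edge from `v` to its child `vj` is
labelled `j` and the edge towards the parent is labelled `q`. -/
noncomputable def stdLabel (q : ℕ) [NeZero q] : Vertex q → Vertex q → Fin (q + 1) :=
  fun v w =>
    if Vertex.parent w = v then Fin.castLE (Nat.le_succ q) (w.lab (v.level + 1))
    else Fin.last q

/-- Convert an edge label in `{0,…,q}` known to be `< q` into a letter in `{0,…,q-1}`. -/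
def toFinQ {q : ℕ} [NeZero q] (j : Fin (q + 1)) : Fin q :=
  if h : (j : ℕ) < q then ⟨j, h⟩ else ⟨0, Nat.pos_of_ne_zero (NeZero.ne q)⟩

/-- The string of labels read along the downward path of length `d` ending at `w`. -/
def labelString {q : ℕ} [NeZero q] (c : Vertex q → Vertex q → Fin (q + 1)) :
    Vertex q → ℕ → List (Fin q)
  | _, 0 => []
  | w, (d + 1) => labelString c (Vertex.parent w) d ++ [toFinQ (c (Vertex.parent w) w)]

/-- The isomorphism `φ^c_v : T_v → T_{q,q}` given by a labelling `c`: a descendant `w`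
of `v` is sent to the string of labels along the path from `v` down to `w`. -/
def phiStr {q : ℕ} [NeZero q] (c : Vertex q → Vertex q → Fin (q + 1)) (v w : Vertex q) :
    List (Fin q) :=
  labelString c w ((w.level - v.level).toNat)

/-- The set `P|_v = {φ^c_{x(v)} ∘ x ∘ (φ^c_v)⁻¹ : x ∈ P}` of sections of elements of `P`
at the vertex `v`, with respect to the labelling `c`. -/
def sectSet {q : ℕ} [NeZero q] (P : Subgroup (Equiv.Perm (Vertex q)))
    (c : Vertex q → Vertex q → Fin (q + 1)) (v : Vertex q) :
    Set (Equiv.Perm (List (Fin q))) :=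
  {g | ∃ x, x ∈ P ∧ ∀ w : Vertex q, Vertex.Descendant v w →
        g (phiStr c v w) = phiStr c (x v) (x w)}

/-- The standard isomorphism `φ_v : T_v → T_{q,q}`: a descendant `w` of `v` of level `m`
is sent to the string `(w_{n+1}, …, w_m)` where `n` is the level of `v`. -/
def stdStr {q : ℕ} (v w : Vertex q) : List (Fin q) :=
  (List.range (w.level - v.level).toNat).map fun k => w.lab (v.level + 1 + k)

/-- The set `{φ_{x(v)} ∘ x ∘ φ_v⁻¹ : x ∈ P}` with respect to the standard isomorphisms. -/
def stdSect {q : ℕ} [NeZero q] (P : Subgroup (Equiv.Perm (Vertex q))) (v : Vertex q) :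
    Set (Equiv.Perm (List (Fin q))) :=
  {g | ∃ x, x ∈ P ∧ ∀ w : Vertex q, Vertex.Descendant v w →
        g (stdStr v w) = stdStr (x v) (x w)}

/-- `Isom(T_{q,q})`: the group of permutations of the set of finite strings over
`{0,…,q-1}` preserving length and the prefix relation. -/
def RIsom (q : ℕ) : Subgroup (Equiv.Perm (List (Fin q))) where
  carrier := {g | (∀ l : List (Fin q), (g l).length = l.length) ∧
    ∀ l₁ l₂ : List (Fin q), l₁ <+: l₂ → g l₁ <+: g l₂}
  one_mem' := ⟨fun _ => rfl, fun _ _ h => h⟩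
  mul_mem' := by
    intro a b ha hb
    constructor
    · intro l
      rw [Equiv.Perm.mul_apply, ha.1, hb.1]
    · intro l₁ l₂ h
      rw [Equiv.Perm.mul_apply, Equiv.Perm.mul_apply]
      exact ha.2 _ _ (hb.2 _ _ h)
  inv_mem' := by
    intro a ha
    have hlen : ∀ l : List (Fin q), (a⁻¹ l).length = l.length := by
      intro l
      have h := ha.1 (a⁻¹ l)
      rw [show a (a⁻¹ l) = l from a.apply_symm_apply l] at h
      exact h.symm
    refine ⟨hlen, ?_⟩
    intro l₁ l₂ h
    have htake : List.take (a⁻¹ l₁).length (a⁻¹ l₂) <+: a⁻¹ l₂ := List.take_prefix _ _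
    have h2 : a (List.take (a⁻¹ l₁).length (a⁻¹ l₂)) <+: a (a⁻¹ l₂) := ha.2 _ _ htake
    rw [show a (a⁻¹ l₂) = l₂ from a.apply_symm_apply l₂] at h2
    have hle : l₁.length ≤ l₂.length := h.length_le
    have hlen3 : (a (List.take (a⁻¹ l₁).length (a⁻¹ l₂))).length = l₁.length := by
      rw [ha.1, List.length_take, hlen, hlen]
      omega
    have hpre : a (List.take (a⁻¹ l₁).length (a⁻¹ l₂)) <+: l₁ :=
      List.prefix_of_prefix_length_le h2 h (le_of_eq hlen3)
    have heq : a (List.take (a⁻¹ l₁).length (a⁻¹ l₂)) = l₁ := hpre.eq_of_length hlen3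
    have heq2 : List.take (a⁻¹ l₁).length (a⁻¹ l₂) = a⁻¹ l₁ := by
      apply a.injective
      rw [heq, show a (a⁻¹ l₁) = l₁ from a.apply_symm_apply l₁]
    rw [← heq2]
    exact List.take_prefix _ _

/-- A subgroup of `Isom(T_{q,q})` is self-replicating if it is self-similar, transitive
on level 1, and all the section homomorphisms `g ↦ g|_w` are surjective. -/
def SelfReplicating {q : ℕ} (G : Subgroup (Equiv.Perm (List (Fin q)))) : Prop :=
  (∀ w : List (Fin q), ∀ g, g ∈ G → g w = w →
      ∃ g', g' ∈ G ∧ ∀ v : List (Fin q), g (w ++ v) = w ++ g' v) ∧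
  (∀ j j' : Fin q, ∃ g ∈ G, g [j] = [j']) ∧
  (∀ w : List (Fin q), ∀ g', g' ∈ G →
      ∃ g, g ∈ G ∧ g w = w ∧ ∀ v : List (Fin q), g (w ++ v) = w ++ g' v)

/-- The stabiliser of the string `w` in `G ≤ Isom(T_{q,q})`, as a subgroup of `G`. -/
def rstab {q : ℕ} (G : Subgroup (Equiv.Perm (List (Fin q)))) (w : List (Fin q)) :
    Subgroup G where
  carrier := {g | (g : Equiv.Perm (List (Fin q))) w = w}
  one_mem' := rfl
  mul_mem' := by
    intro a b ha hb
    show ((a * b : G) : Equiv.Perm (List (Fin q))) w = w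
    rw [Subgroup.coe_mul, Equiv.Perm.mul_apply]
    rw [show (b : Equiv.Perm (List (Fin q))) w = w from hb,
      show (a : Equiv.Perm (List (Fin q))) w = w from ha]
  inv_mem' := by
    intro a ha
    show ((a⁻¹ : G) : Equiv.Perm (List (Fin q))) w = w
    rw [Subgroup.coe_inv, Equiv.Perm.inv_eq_iff_eq]
    exact (show (a : Equiv.Perm (List (Fin q))) w = w from ha).symm



section Aux
variable {q : ℕ} [NeZero q]

lemma vertex_ext' {v w : Vertex q} (hl : v.level = w.level)
    (h : ∀ i ≤ v.level, v.lab i = w.lab i) : v = w := by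
  refine Vertex.ext hl (funext fun i => ?_)
  by_cases hi : i ≤ v.level
  · exact h i hi
  · have h1 := v.zero_gt i (by omega)
    have h2 := w.zero_gt i (by omega)
    exact Fin.ext (h1.trans h2.symm)

lemma parent_level (v : Vertex q) : v.parent.level = v.level - 1 := rfl

lemma parent_lab (v : Vertex q) {i : ℤ} (hi : i ≤ v.level - 1) :
    v.parent.lab i = v.lab i := by
  show (if v.level - 1 < i then 0 else v.lab i) = v.lab i
  rw [if_neg (by omega)]

lemma parentIter_level (k : ℕ) (v : Vertex q) :
    (Vertex.parent^[k] v).level = v.level - k := by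
  induction k with
  | zero => simp
  | succ k ih =>
    rw [Function.iterate_succ_apply', parent_level, ih]
    push_cast; ring

lemma parentIter_lab (k : ℕ) (v : Vertex q) {i : ℤ} (hi : i ≤ v.level - k) :
    (Vertex.parent^[k] v).lab i = v.lab i := by
  induction k with
  | zero => simp
  | succ k ih =>
    rw [Function.iterate_succ_apply']
    rw [parent_lab _ (by rw [parentIter_level]; push_cast at hi ⊢; omega)]
    exact ih (by push_cast at hi ⊢; omega)

lemma ray_level (ξ : ℤ → Fin q) (N : ℤ) (hξ : ∀ i : ℤ, i < N → (ξ i : ℕ) = 0) (m : ℤ) :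
    (ray q ξ N hξ m).level = m := rfl

lemma ray_lab_le (ξ : ℤ → Fin q) (N : ℤ) (hξ : ∀ i : ℤ, i < N → (ξ i : ℕ) = 0)
    {m i : ℤ} (hi : i ≤ m) : (ray q ξ N hξ m).lab i = ξ i := by
  show (if m < i then 0 else ξ i) = ξ i
  rw [if_neg (by omega)]

lemma ray_parent (ξ : ℤ → Fin q) (N : ℤ) (hξ : ∀ i : ℤ, i < N → (ξ i : ℕ) = 0) (m : ℤ) :
    (ray q ξ N hξ m).parent = ray q ξ N hξ (m - 1) := by
  refine vertex_ext' rfl ?_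
  intro i hi
  rw [parent_level, ray_level] at hi
  rw [parent_lab _ (by rw [ray_level]; omega), ray_lab_le _ _ _ (by omega),
    ray_lab_le _ _ _ hi]

lemma ray_parentIter (ξ : ℤ → Fin q) (N : ℤ) (hξ : ∀ i : ℤ, i < N → (ξ i : ℕ) = 0)
    (k : ℕ) (m : ℤ) :
    Vertex.parent^[k] (ray q ξ N hξ m) = ray q ξ N hξ (m - k) := by
  induction k with
  | zero => simp
  | succ k ih =>
    rw [Function.iterate_succ_apply', ih, ray_parent]
    congr 1
    push_cast; ring

lemma isomOmega_parentIter {x : Equiv.Perm (Vertex q)} (hx : x ∈ IsomOmega q)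
    (k : ℕ) (v : Vertex q) :
    x (Vertex.parent^[k] v) = Vertex.parent^[k] (x v) := by
  induction k with
  | zero => rfl
  | succ k ih =>
    rw [Function.iterate_succ_apply', Function.iterate_succ_apply', hx, ih]

lemma isom_ray_step (ξ : ℤ → Fin q) (N : ℤ) (hξ : ∀ i : ℤ, i < N → (ξ i : ℕ) = 0)
    {x : Equiv.Perm (Vertex q)} (hx : x ∈ IsomOmega q)
    {m : ℤ} (hxm : x (ray q ξ N hξ m) = ray q ξ N hξ (m + 1))
    {a : ℤ} (ha : a ≤ m) : x (ray q ξ N hξ a) = ray q ξ N hξ (a + 1) := by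
  have h1 : Vertex.parent^[(m - a).toNat] (ray q ξ N hξ m) = ray q ξ N hξ a := by
    rw [ray_parentIter]; congr 1; omega
  have h2 : Vertex.parent^[(m - a).toNat] (ray q ξ N hξ (m + 1)) = ray q ξ N hξ (a + 1) := by
    rw [ray_parentIter]; congr 1; omega
  rw [← h1, isomOmega_parentIter hx, hxm, h2]

lemma descendants_finite (u : Vertex q) (k : ℕ) :
    {w : Vertex q | Vertex.parent^[k] w = u}.Finite := by
  rw [← Set.finite_coe_iff]
  refine Finite.of_injective
    (fun w => fun j : Fin k => (w : Vertex q).lab (u.level + 1 + j)) ?_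
  rintro ⟨w, hw⟩ ⟨w', hw'⟩ hww
  simp only [Set.mem_setOf_eq] at hw hw'
  have hl : w.level = u.level + k := by
    have := parentIter_level k w; rw [hw] at this; omega
  have hl' : w'.level = u.level + k := by
    have := parentIter_level k w'; rw [hw'] at this; omega
  refine Subtype.ext (vertex_ext' (v := w) (w := w') (by omega) ?_)
  intro i hi
  by_cases h1 : i ≤ u.level
  · have e1 : w.lab i = u.lab i := by
      rw [← hw]; exact (parentIter_lab k w (by omega)).symm
    have e2 : w'.lab i = u.lab i := by
      rw [← hw']; exact (parentIter_lab k w' (by omega)).symm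
    rw [e1, e2]
  · have hj : (i - u.level - 1).toNat < k := by omega
    have hthis := congrFun hww ⟨(i - u.level - 1).toNat, hj⟩
    have hval : ((⟨(i - u.level - 1).toNat, hj⟩ : Fin k) : ℕ) = (i - u.level - 1).toNat := rfl
    simp only [hval] at hthis
    rw [show u.level + 1 + (((i - u.level - 1).toNat : ℕ) : ℤ) = i from by omega] at hthis
    exact hthis

lemma ultra_exists {α : Type*} (U : Ultrafilter ℕ) {f : ℕ → α} {s : Set α}
    (hs : s.Finite) (h : {n | f n ∈ s} ∈ U) : ∃ a, {n | f n = a} ∈ U := by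
  by_contra hc
  push_neg at hc
  have h2 : ∀ a ∈ s, {n | f n = a}ᶜ ∈ U := fun a _ =>
    Ultrafilter.compl_mem_iff_notMem.mpr (hc a)
  have h3 : (⋂ a ∈ s, {n | f n = a}ᶜ) ∈ U := (Filter.biInter_mem hs).mpr h2
  obtain ⟨n, hn1, hn2⟩ := Filter.nonempty_of_mem (Filter.inter_mem h h3)
  rw [Set.mem_iInter₂] at hn2
  exact hn2 (f n) hn1 rfl

lemma closed_perm_mem {X : Type*} {S : Set (Equiv.Perm X)}
    (hS : @IsClosed _ (permTop X) S) (x : Equiv.Perm X)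
    (h : ∀ A : Finset X, ∃ p ∈ S, (∀ a ∈ A, p a = x a) ∧ ∀ a ∈ A, p⁻¹ a = x⁻¹ a) :
    x ∈ S := by
  classical
  letI tX : TopologicalSpace X := ⊥
  by_contra hx
  have hopen : @IsOpen _ (permTop X) Sᶜ := hS.isOpen_compl
  obtain ⟨W, hW, hWpre⟩ := isOpen_induced_iff.mp hopen
  have hiff := Set.ext_iff.mp hWpre
  have hxW : ((x : X → X), ((x⁻¹ : Equiv.Perm X) : X → X)) ∈ W :=
    (hiff x).mpr hx
  obtain ⟨U1, U2, hU1, hU2, hx1, hx2, hsub⟩ := isOpen_prod_iff.mp hW _ _ hxW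
  obtain ⟨I1, u1, hu1, hsub1⟩ := isOpen_pi_iff.mp hU1 _ hx1
  obtain ⟨I2, u2, hu2, hsub2⟩ := isOpen_pi_iff.mp hU2 _ hx2
  obtain ⟨p, hpS, hp1, hp2⟩ := h (I1 ∪ I2)
  have hp1' : (p : X → X) ∈ (I1 : Set X).pi u1 := by
    intro a ha
    have ha' : a ∈ I1 := Finset.mem_coe.mp ha
    have heq := hp1 a (Finset.mem_union_left _ ha')
    show (p : X → X) a ∈ u1 a
    rw [heq]
    exact (hu1 a ha').2
  have hp2' : ((p⁻¹ : Equiv.Perm X) : X → X) ∈ (I2 : Set X).pi u2 := by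
    intro a ha
    have ha' : a ∈ I2 := Finset.mem_coe.mp ha
    have heq := hp2 a (Finset.mem_union_right _ ha')
    show ((p⁻¹ : Equiv.Perm X) : X → X) a ∈ u2 a
    rw [heq]
    exact (hu2 a ha').2
  have hmemW : ((p : X → X), ((p⁻¹ : Equiv.Perm X) : X → X)) ∈ W :=
    hsub ⟨hsub1 hp1', hsub2 hp2'⟩
  exact (hiff p).mp hmemW hpS

end Aux


end Scale

open Scale in
/-- For any end `ω' ≠ ω`, represented by `ξ`, a scale group contains an
element translating the bi-infinite path `(ω, ω')` one step towards `ω'`: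
`x(ξ|_m) = ξ|_{m+1}` for every `m`. -/
theorem statement_3 (q : ℕ) [NeZero q] (hq : 2 ≤ q)
    (P : Subgroup (Equiv.Perm (Vertex q))) (hP : IsScaleGroup P)
    (ξ : ℤ → Fin q) (N : ℤ) (hξ : ∀ i : ℤ, i < N → (ξ i : ℕ) = 0) :
    ∃ x ∈ P, ∀ m : ℤ, x (ray q ξ N hξ m) = ray q ξ N hξ (m + 1) := by
  classical
  obtain ⟨hPle, hPclosed, htrans⟩ := hP
  have hE : ∀ n : ℕ, ∃ z : Equiv.Perm (Vertex q), z ∈ P ∧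
      z (ray q ξ N hξ (n : ℤ)) = ray q ξ N hξ ((n : ℤ) + 1) := by
    intro n
    obtain ⟨z, hz1, hz2⟩ := htrans (ray q ξ N hξ (n : ℤ)) (ray q ξ N hξ ((n : ℤ) + 1))
    exact ⟨z, hz1, hz2⟩
  choose xs hmem heq using hE
  have hstep : ∀ (n : ℕ) (a : ℤ), a ≤ (n : ℤ) →
      xs n (ray q ξ N hξ a) = ray q ξ N hξ (a + 1) := fun n a ha =>
    isom_ray_step ξ N hξ (hPle (hmem n)) (heq n) ha
  have hstepinv : ∀ (n : ℕ) (a : ℤ), a - 1 ≤ (n : ℤ) →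
      (xs n)⁻¹ (ray q ξ N hξ a) = ray q ξ N hξ (a - 1) := by
    intro n a ha
    apply (xs n).injective
    rw [Equiv.Perm.inv_def, Equiv.apply_symm_apply, hstep n (a - 1) ha]
    congr 1
    ring
  let U : Ultrafilter ℕ := Ultrafilter.of Filter.atTop
  have hUle : (U : Filter ℕ) ≤ Filter.atTop := Ultrafilter.of_le _
  have hUtail : ∀ a : ℤ, {n : ℕ | a ≤ (n : ℤ)} ∈ U := by
    intro a
    apply hUle
    exact Filter.mem_atTop_sets.mpr ⟨a.toNat, fun n hn => by simp only [Set.mem_setOf_eq]; omega⟩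
  have hbound : ∀ v : Vertex q, ∃ (a : ℤ) (d : ℕ),
      Vertex.parent^[d] v = ray q ξ N hξ a := by
    intro v
    obtain ⟨M, hM⟩ := v.bdd
    refine ⟨min (min M N) v.level - 1, (v.level - (min (min M N) v.level - 1)).toNat, ?_⟩
    refine vertex_ext' ?_ ?_
    · rw [parentIter_level, ray_level]; omega
    · intro i hi
      rw [parentIter_level] at hi
      rw [parentIter_lab _ _ hi, ray_lab_le _ _ _ (by omega)]
      refine Fin.ext ?_
      rw [hM i (by omega), hξ i (by omega)]
  have hFex : ∀ v : Vertex q, ∃ w, {n : ℕ | xs n v = w} ∈ U := by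
    intro v
    obtain ⟨a, d, hv⟩ := hbound v
    apply ultra_exists U (descendants_finite (ray q ξ N hξ (a + 1)) d)
    refine Filter.mem_of_superset (hUtail a) ?_
    intro n hn
    show Vertex.parent^[d] (xs n v) = ray q ξ N hξ (a + 1)
    rw [← isomOmega_parentIter (hPle (hmem n)), hv, hstep n a hn]
  have hGex : ∀ v : Vertex q, ∃ w, {n : ℕ | (xs n)⁻¹ v = w} ∈ U := by
    intro v
    obtain ⟨a, d, hv⟩ := hbound v
    apply ultra_exists U (descendants_finite (ray q ξ N hξ (a - 1)) d)
    refine Filter.mem_of_superset (hUtail a) ?_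
    intro n hn
    have hn' : a ≤ (n : ℤ) := hn
    show Vertex.parent^[d] ((xs n)⁻¹ v) = ray q ξ N hξ (a - 1)
    rw [← isomOmega_parentIter (Subgroup.inv_mem _ (hPle (hmem n))), hv,
      hstepinv n a (by omega)]
  choose f hf using hFex
  choose g hg using hGex
  have hpick : ∀ s : Set ℕ, s ∈ U → ∃ n, n ∈ s := fun s hs => Filter.nonempty_of_mem hs
  have hgf : ∀ v, g (f v) = v := by
    intro v
    obtain ⟨n, h1, h2⟩ := hpick _ (Filter.inter_mem (hf v) (hg (f v)))
    rw [← h2, ← h1, Equiv.Perm.inv_def, Equiv.symm_apply_apply]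
  have hfg : ∀ v, f (g v) = v := by
    intro v
    obtain ⟨n, h2, h1⟩ := hpick _ (Filter.inter_mem (hg v) (hf (g v)))
    rw [← h1, ← h2, Equiv.Perm.inv_def, Equiv.apply_symm_apply]
  let x : Equiv.Perm (Vertex q) := ⟨f, g, hgf, hfg⟩
  have hxcoe : ∀ v, x v = f v := fun _ => rfl
  have hxinvcoe : ∀ v, x⁻¹ v = g v := fun _ => rfl
  refine ⟨x, ?_, ?_⟩
  · apply closed_perm_mem hPclosed
    intro A
    have hmemU : (⋂ a ∈ A, ({n : ℕ | xs n a = f a} ∩ {n : ℕ | (xs n)⁻¹ a = g a})) ∈ U := by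
      exact (Filter.biInter_finset_mem A).mpr fun a _ => Filter.inter_mem (hf a) (hg a)
    obtain ⟨n, hn⟩ := hpick _ hmemU
    rw [Set.mem_iInter₂] at hn
    refine ⟨xs n, hmem n, fun a ha => ?_, fun a ha => ?_⟩
    · rw [hxcoe a]; exact (hn a ha).1
    · rw [hxinvcoe a]; exact (hn a ha).2
  · intro m
    obtain ⟨n, h1, h2⟩ := hpick _ (Filter.inter_mem (hf (ray q ξ N hξ m)) (hUtail m))
    rw [hxcoe, ← h1, hstep n m h2]
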